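/- Let C be a nonempty compact convex subset of a real uniformly convex Banach space X, let T : C → C be a uniformly L-Lipschitzian, nearly nonexpansive mapping with respect to {a_n} with Σ_{n=0}^∞ a_n < ∞, let {α_n} satisfy 0 < a ≤ α_n ≤ b < 1 for all n, and let {x_n} be the modified Picard–Mann hybrid iteration y_n = (1 − α_n)x_n + α_n T^n x_n, x_{n+1} = T^n y_n. Then {x_n} converges strongly to a fixed point of T if and only if liminf_{n→∞} d(x_n, F(T)) = 0, where d(x, F(T)) = inf{‖x − p‖ : p ∈ F(T)}. -/

import Mathlib

open Filter Metric

theorem myExistsFixed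
    {X : Type*} [NormedAddCommGroup X] [NormedSpace ℝ X] [UniformConvexSpace X]
    (C : Set X) (hC : C.Nonempty) (hCcp : IsCompact C) (hCcv : Convex ℝ C)
    (T : X → X) (hT : Set.MapsTo T C C)
    (L : ℝ)
    (hTL : ∀ x ∈ C, ∀ y ∈ C, ∀ n, 1 ≤ n → ‖T^[n] x - T^[n] y‖ ≤ L * ‖x - y‖)
    (a : ℕ → ℝ) (ha0 : ∀ n, 0 ≤ a n)
    (halim : Filter.Tendsto a Filter.atTop (nhds 0))
    (hTa : ∀ x ∈ C, ∀ y ∈ C, ∀ n, 1 ≤ n → ‖T^[n] x - T^[n] y‖ ≤ ‖x - y‖ + a n) :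
    ∃ p ∈ C, T p = p := by
  obtain ⟨c0, hc0⟩ := hC
  set u : ℕ → X := fun n => T^[n] c0 with hu_def
  have huC : ∀ n, u n ∈ C := fun n => hT.iterate n hc0
  obtain ⟨M, hM⟩ := hCcp.isBounded.subset_closedBall 0
  have hMmem : ∀ w ∈ C, ‖w‖ ≤ M := fun w hw => by
    simpa [Metric.mem_closedBall, dist_eq_norm] using hM hw
  set r : X → ℝ := fun z => Filter.limsup (fun n => ‖u n - z‖) Filter.atTop with hr_def
  have hbd : ∀ z : X, IsBoundedUnder (· ≤ ·) atTop (fun n => ‖u n - z‖) := by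
    intro z
    refine isBoundedUnder_of ⟨M + ‖z‖, fun n => ?_⟩
    calc ‖u n - z‖ ≤ ‖u n‖ + ‖z‖ := norm_sub_le _ _
      _ ≤ M + ‖z‖ := by have := hMmem _ (huC n); linarith
  have hcob : ∀ z : X, IsCoboundedUnder (· ≤ ·) atTop (fun n => ‖u n - z‖) :=
    fun z => isCoboundedUnder_le_of_le atTop (x := 0) (fun n => norm_nonneg _)
  have hrnn : ∀ z : X, 0 ≤ r z := fun z =>
    le_limsup_of_frequently_le (Frequently.of_forall fun n => norm_nonneg _) (hbd z)
  have hr_le : ∀ z w : X, r z ≤ r w + ‖z - w‖ := by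
    intro z w
    refine le_of_forall_pos_le_add fun η hη => ?_
    have hev : ∀ᶠ n in atTop, ‖u n - w‖ < r w + η :=
      eventually_lt_of_limsup_lt (by exact lt_add_of_pos_right (r w) hη) (hbd w)
    refine limsup_le_of_le (hcob z) (hev.mono fun n h => ?_)
    calc ‖u n - z‖ ≤ ‖u n - w‖ + ‖w - z‖ := norm_sub_le_norm_sub_add_norm_sub _ _ _
      _ ≤ (r w + η) + ‖w - z‖ := by linarith
      _ = r w + ‖z - w‖ + η := by rw [norm_sub_rev]; ring
  have hrcont : Continuous r := by
    have : LipschitzWith 1 r := LipschitzWith.of_dist_le_mul fun z w => by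
      rw [Real.dist_eq, NNReal.coe_one, one_mul, abs_sub_le_iff]
      constructor
      · have := hr_le z w; rw [dist_eq_norm]; linarith
      · have := hr_le w z; rw [dist_eq_norm, norm_sub_rev]; linarith
    exact this.continuous
  obtain ⟨z₀, hz₀C, hmin⟩ := hCcp.exists_isMinOn ⟨c0, hc0⟩ hrcont.continuousOn
  have key : ∀ z ∈ C, ∀ m, 1 ≤ m → r (T^[m] z) ≤ r z + a m := by
    intro z hzC m hm
    refine le_of_forall_pos_le_add fun η hη => ?_
    have hev : ∀ᶠ n in atTop, ‖u n - z‖ < r z + η :=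
      eventually_lt_of_limsup_lt (by exact lt_add_of_pos_right (r z) hη) (hbd z)
    have hev2 : ∀ᶠ n in atTop, ‖u (n - m) - z‖ < r z + η :=
      (tendsto_sub_atTop_nat m).eventually hev
    have hev3 : ∀ᶠ n in atTop, m ≤ n := eventually_ge_atTop m
    refine limsup_le_of_le (hcob _) ((hev2.and hev3).mono fun n ⟨h1, h2⟩ => ?_)
    have hun : u n = T^[m] (u (n - m)) := by
      rw [hu_def]
      simp only
      rw [← Function.iterate_add_apply, Nat.add_sub_cancel' h2]
    calc ‖u n - T^[m] z‖ = ‖T^[m] (u (n - m)) - T^[m] z‖ := by rw [← hun]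
      _ ≤ ‖u (n - m) - z‖ + a m := hTa _ (huC _) _ hzC m hm
      _ ≤ r z + a m + η := by linarith
  -- continuity of T on C
  have hTcont : ∀ (v : ℕ → X) (w : X), (∀ n, v n ∈ C) → w ∈ C →
      Tendsto v atTop (nhds w) → Tendsto (fun n => T (v n)) atTop (nhds (T w)) := by
    intro v w hvC hwC hv
    rw [tendsto_iff_norm_sub_tendsto_zero] at hv ⊢
    refine squeeze_zero (g := fun n => L * ‖v n - w‖) (fun n => norm_nonneg _)
      (fun n => ?_) ?_
    · have := hTL (v n) (hvC n) w hwC 1 le_rfl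
      simpa using this
    · have := hv.const_mul L
      simpa using this
  -- it suffices to show T^[m] z₀ → z₀ (then also u-limit case is similar)
  have main : Tendsto (fun m => T^[m] z₀) atTop (nhds z₀) := by
    rcases le_or_gt (r z₀) 0 with hrm | hrm
    · -- r z₀ ≤ 0 : u n → z₀ and so do the iterates of z₀
      rw [Metric.tendsto_nhds]
      intro ε hε
      filter_upwards [halim.eventually_lt_const (show (0:ℝ) < ε/2 by linarith),
        eventually_ge_atTop 1] with m ham hm1
      have e1 : ∀ᶠ n in atTop, ‖u n - T^[m] z₀‖ < r (T^[m] z₀) + ε/4 :=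
        eventually_lt_of_limsup_lt (by exact lt_add_of_pos_right (r (T^[m] z₀)) (by linarith : (0:ℝ) < ε/4)) (hbd _)
      have e2 : ∀ᶠ n in atTop, ‖u n - z₀‖ < ε/4 :=
        eventually_lt_of_limsup_lt (lt_of_le_of_lt hrm (by linarith)) (hbd _)
      obtain ⟨n, h1, h2⟩ := (e1.and e2).exists
      have hk := key z₀ hz₀C m hm1
      have htri : ‖T^[m] z₀ - z₀‖ ≤ ‖u n - T^[m] z₀‖ + ‖u n - z₀‖ := by
        have : T^[m] z₀ - z₀ = (u n - z₀) - (u n - T^[m] z₀) := by abel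
        rw [this]
        calc ‖(u n - z₀) - (u n - T^[m] z₀)‖ ≤ ‖u n - z₀‖ + ‖u n - T^[m] z₀‖ :=
          norm_sub_le _ _
          _ = ‖u n - T^[m] z₀‖ + ‖u n - z₀‖ := by ring
      rw [dist_eq_norm]
      linarith
    · -- r z₀ > 0 : uniform convexity argument
      have hclaim : ∀ ε > (0:ℝ), ∃ ν > (0:ℝ), ∀ v ∈ C, r v < r z₀ + ν → ‖v - z₀‖ < ε := by
        intro ε hε
        have hrm1 : (0:ℝ) < r z₀ + 1 := by linarith
        have hε₀ : 0 < ε / (r z₀ + 1) := div_pos hε hrm1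
        obtain ⟨δ, hδ, hUC⟩ := exists_forall_closed_ball_dist_add_le_two_sub X hε₀
        refine ⟨min 1 (δ * r z₀ / 2) / 2, by positivity, fun v hvC hrv => ?_⟩
        by_contra hcon
        push_neg at hcon
        set ν : ℝ := min 1 (δ * r z₀ / 2) / 2 with hν_def
        have hν1 : ν ≤ 1/2 := by
          rw [hν_def]; have := min_le_left 1 (δ * r z₀ / 2); linarith
        have hν2 : ν ≤ δ * r z₀ / 4 := by
          rw [hν_def]; have := min_le_right 1 (δ * r z₀ / 2); linarith
        have hνpos : 0 < ν := by rw [hν_def]; positivity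
        set R : ℝ := r z₀ + ν with hR_def
        have hRpos : 0 < R := by rw [hR_def]; linarith
        have hR1 : R ≤ r z₀ + 1 := by rw [hR_def]; linarith
        have hev1 : ∀ᶠ n in atTop, ‖u n - z₀‖ < R :=
          eventually_lt_of_limsup_lt (by rw [hR_def]; exact lt_add_of_pos_right _ hνpos) (hbd _)
        have hev2 : ∀ᶠ n in atTop, ‖u n - v‖ < R := eventually_lt_of_limsup_lt hrv (hbd _)
        set w : X := (2⁻¹ : ℝ) • (z₀ + v) with hw_def
        have hwC : w ∈ C := by
          have := hCcv hz₀C hvC (by norm_num : (0:ℝ) ≤ 2⁻¹) (by norm_num : (0:ℝ) ≤ 2⁻¹)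
            (by norm_num : (2⁻¹ : ℝ) + 2⁻¹ = 1)
          rw [hw_def, smul_add]
          exact this
        have hrw : r w ≤ R - δ * r z₀ / 2 := by
          refine limsup_le_of_le (hcob _) ((hev1.and hev2).mono fun n ⟨h1, h2⟩ => ?_)
          have hx' : ‖R⁻¹ • (u n - z₀)‖ ≤ 1 := by
            rw [norm_smul, Real.norm_eq_abs, abs_of_pos (inv_pos.2 hRpos)]
            rw [inv_mul_le_iff₀ hRpos, mul_one]
            exact h1.le
          have hy' : ‖R⁻¹ • (u n - v)‖ ≤ 1 := by
            rw [norm_smul, Real.norm_eq_abs, abs_of_pos (inv_pos.2 hRpos)]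
            rw [inv_mul_le_iff₀ hRpos, mul_one]
            exact h2.le
          have hxy : ε / (r z₀ + 1) ≤ ‖R⁻¹ • (u n - z₀) - R⁻¹ • (u n - v)‖ := by
            rw [← smul_sub]
            have : (u n - z₀) - (u n - v) = v - z₀ := by abel
            rw [this, norm_smul, Real.norm_eq_abs, abs_of_pos (inv_pos.2 hRpos)]
            rw [← div_eq_inv_mul]
            gcongr
          have h2δ := hUC hx' hy' hxy
          have hsum : ‖(u n - z₀) + (u n - v)‖ ≤ (2 - δ) * R := by
            have : R⁻¹ • (u n - z₀) + R⁻¹ • (u n - v) = R⁻¹ • ((u n - z₀) + (u n - v)) := by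
              rw [smul_add]
            rw [this, norm_smul, Real.norm_eq_abs, abs_of_pos (inv_pos.2 hRpos),
              inv_mul_le_iff₀ hRpos] at h2δ
            linarith [h2δ]
          have hmid : u n - w = (2⁻¹ : ℝ) • ((u n - z₀) + (u n - v)) := by
            rw [hw_def]; module
          rw [hmid, norm_smul, Real.norm_eq_abs]
          have : |(2⁻¹ : ℝ)| = 2⁻¹ := by norm_num
          rw [this]
          have hRlow : r z₀ ≤ R := by rw [hR_def]; linarith
          nlinarith [hsum, hδ, hrm]
        have hge : r z₀ ≤ r w := hmin hwC
        rw [hR_def] at hrw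
        linarith
      rw [Metric.tendsto_nhds]
      intro ε hε
      obtain ⟨ν, hνpos, hν⟩ := hclaim ε hε
      filter_upwards [halim.eventually_lt_const hνpos, eventually_ge_atTop 1] with m ham hm1
      rw [dist_eq_norm]
      refine hν _ (hT.iterate m hz₀C) ?_
      calc r (T^[m] z₀) ≤ r z₀ + a m := key z₀ hz₀C m hm1
        _ < r z₀ + ν := by linarith
  refine ⟨z₀, hz₀C, ?_⟩
  have h1 : Tendsto (fun m => T^[m+1] z₀) atTop (nhds z₀) :=
    (tendsto_add_atTop_iff_nat 1).2 main
  have h2 : Tendsto (fun m => T (T^[m] z₀)) atTop (nhds (T z₀)) :=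
    hTcont _ _ (fun m => hT.iterate m hz₀C) hz₀C main
  have h3 : (fun m => T^[m+1] z₀) = fun m => T (T^[m] z₀) := by
    funext m; rw [Function.iterate_succ_apply']
  rw [h3] at h1
  exact (tendsto_nhds_unique h2 h1)

theorem stmt_13
    {X : Type*} [NormedAddCommGroup X] [NormedSpace ℝ X]
    [CompleteSpace X] [UniformConvexSpace X]
    (C : Set X) (hC : C.Nonempty) (hCcp : IsCompact C) (hCcv : Convex ℝ C)
    (T : X → X) (hT : Set.MapsTo T C C)
    (L : ℝ) (hL : 0 < L)
    (hTL : ∀ x ∈ C, ∀ y ∈ C, ∀ n, 1 ≤ n → ‖T^[n] x - T^[n] y‖ ≤ L * ‖x - y‖)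
    (a : ℕ → ℝ) (ha : ∀ n, a n ∈ Set.Ico (0 : ℝ) 1)
    (halim : Filter.Tendsto a Filter.atTop (nhds 0))
    (hasum : Summable a)
    (hTa : ∀ x ∈ C, ∀ y ∈ C, ∀ n, 1 ≤ n → ‖T^[n] x - T^[n] y‖ ≤ ‖x - y‖ + a n)
    (α : ℕ → ℝ) (a' b' : ℝ) (ha' : 0 < a') (hb' : b' < 1)
    (hα : ∀ n, a' ≤ α n ∧ α n ≤ b')
    (x y : ℕ → X)
    (hx0 : x 0 ∈ C)
    (hxC : ∀ n, x n ∈ C) (hyC : ∀ n, y n ∈ C)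
    (hy : ∀ n, y n = (1 - α n) • x n + α n • T^[n] (x n))
    (hx : ∀ n, x (n + 1) = T^[n] (y n)) :
    (∃ p ∈ C, T p = p ∧ Filter.Tendsto x Filter.atTop (nhds p)) ↔
      Filter.liminf (fun n => Metric.infDist (x n) {p ∈ C | T p = p}) Filter.atTop = 0 := by
  set F : Set X := {p ∈ C | T p = p} with hF_def
  constructor
  · rintro ⟨p, hpC, hpT, hlim⟩
    have hpF : p ∈ F := ⟨hpC, hpT⟩
    have h1 : Tendsto (fun n => infDist (x n) F) atTop (nhds 0) := by
      refine squeeze_zero (fun n => infDist_nonneg) (fun n => infDist_le_dist_of_mem hpF) ?_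
      exact tendsto_iff_dist_tendsto_zero.1 hlim
    exact h1.liminf_eq
  · intro hliminf
    -- F is nonempty
    obtain ⟨p₀, hp₀C, hp₀T⟩ := myExistsFixed C hC hCcp hCcv T hT L hTL a
      (fun n => (ha n).1) halim hTa
    have hFne : F.Nonempty := ⟨p₀, hp₀C, hp₀T⟩
    -- Fejér-type inequality
    have key : ∀ q ∈ F, ∀ n, ‖x (n + 1) - q‖ ≤ ‖x n - q‖ + 2 * a n := by
      intro q hq n
      obtain ⟨hqC, hqT⟩ := hq
      match n with
      | 0 =>
        have hx1 : x 1 = x 0 := by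
          rw [hx 0, Function.iterate_zero_apply, hy 0, Function.iterate_zero_apply,
            sub_smul, one_smul, sub_add_cancel]
        rw [hx1]
        have := (ha 0).1
        linarith
      | Nat.succ k =>
        set m := k + 1 with hm_def
        have hm1 : 1 ≤ m := Nat.succ_le_succ (Nat.zero_le k)
        have hqit : T^[m] q = q := Function.iterate_fixed hqT m
        have step1 : ‖y m - q‖ ≤ ‖x m - q‖ + a m := by
          have hid : y m - q = (1 - α m) • (x m - q) + α m • (T^[m] (x m) - q) := by
            rw [hy m]; module
          have hαm := hα m
          have h1 : ‖(1 - α m) • (x m - q)‖ = (1 - α m) * ‖x m - q‖ := by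
            rw [norm_smul, Real.norm_eq_abs, abs_of_nonneg (by linarith : (0:ℝ) ≤ 1 - α m)]
          have h2 : ‖α m • (T^[m] (x m) - q)‖ = α m * ‖T^[m] (x m) - q‖ := by
            rw [norm_smul, Real.norm_eq_abs, abs_of_nonneg (by linarith : (0:ℝ) ≤ α m)]
          have h3 : ‖T^[m] (x m) - q‖ ≤ ‖x m - q‖ + a m := by
            calc ‖T^[m] (x m) - q‖ = ‖T^[m] (x m) - T^[m] q‖ := by rw [hqit]
              _ ≤ ‖x m - q‖ + a m := hTa _ (hxC m) _ hqC m hm1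
          calc ‖y m - q‖ ≤ ‖(1 - α m) • (x m - q)‖ + ‖α m • (T^[m] (x m) - q)‖ := by
                rw [hid]; exact norm_add_le _ _
            _ = (1 - α m) * ‖x m - q‖ + α m * ‖T^[m] (x m) - q‖ := by rw [h1, h2]
            _ ≤ ‖x m - q‖ + a m := by nlinarith [(ha m).1, norm_nonneg (x m - q)]
        calc ‖x (m + 1) - q‖ = ‖T^[m] (y m) - T^[m] q‖ := by rw [hx m, hqit]
          _ ≤ ‖y m - q‖ + a m := hTa _ (hyC m) _ hqC m hm1
          _ ≤ ‖x m - q‖ + 2 * a m := by linarith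
    have key2 : ∀ q ∈ F, ∀ n m, n ≤ m →
        ‖x m - q‖ ≤ ‖x n - q‖ + 2 * ∑ k ∈ Finset.Ico n m, a k := by
      intro q hq n m hnm
      induction m with
      | zero =>
        have : n = 0 := Nat.le_zero.1 hnm
        subst this; simp
      | succ m ih =>
        rcases Nat.lt_or_ge n (m + 1) with h | h
        · have hnm' : n ≤ m := Nat.lt_succ_iff.1 h
          have := ih hnm'
          have hstep := key q hq m
          have hsum : ∑ k ∈ Finset.Ico n (m + 1), a k
              = (∑ k ∈ Finset.Ico n m, a k) + a m := by
            rw [Finset.sum_Ico_succ_top hnm']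
          rw [hsum]
          linarith
        · have : n = m + 1 := le_antisymm hnm h
          subst this; simp
    -- extract approximating sequence
    have hfreq : ∀ k : ℕ, ∃ n, k ≤ n ∧ infDist (x n) F < 1 / (k + 1) := by
      intro k
      have hpos : (0:ℝ) < 1 / (k + 1) := by positivity
      have : liminf (fun n => infDist (x n) F) atTop < 1 / (k + 1) := by
        rw [hliminf]; exact hpos
      obtain ⟨M, hM⟩ := hCcp.isBounded.subset_closedBall 0
      have hMmem : ∀ w ∈ C, ‖w‖ ≤ M := fun w hw => by
        simpa [Metric.mem_closedBall, dist_eq_norm] using hM hw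
      have hco : IsCoboundedUnder (· ≥ ·) atTop (fun n => infDist (x n) F) := by
        apply IsBoundedUnder.isCoboundedUnder_ge
        refine isBoundedUnder_of ⟨M + ‖p₀‖, fun n => ?_⟩
        calc infDist (x n) F ≤ dist (x n) p₀ := infDist_le_dist_of_mem ⟨hp₀C, hp₀T⟩
          _ = ‖x n - p₀‖ := dist_eq_norm _ _
          _ ≤ ‖x n‖ + ‖p₀‖ := norm_sub_le _ _
          _ ≤ M + ‖p₀‖ := by have := hMmem _ (hxC n); linarith
      have := frequently_lt_of_liminf_lt hco this
      rw [Filter.frequently_atTop] at this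
      obtain ⟨n, hn1, hn2⟩ := this k
      exact ⟨n, hn1, hn2⟩
    choose n hn hinf using hfreq
    have hq : ∀ k, ∃ q ∈ F, dist (x (n k)) q < 1 / (k + 1) := by
      intro k
      exact (infDist_lt_iff hFne).1 (hinf k)
    choose q hqF hqd using hq
    obtain ⟨p, hpC, φ, hφ, hconv⟩ := hCcp.tendsto_subseq (fun k => (hqF k).1)
    -- p is a fixed point
    have hpT : T p = p := by
      have h1 : Tendsto (fun j => T (q (φ j))) atTop (nhds (T p)) := by
        rw [tendsto_iff_norm_sub_tendsto_zero]
        refine squeeze_zero (g := fun j => L * ‖q (φ j) - p‖) (fun j => norm_nonneg _)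
          (fun j => ?_) ?_
        · have := hTL (q (φ j)) (hqF (φ j)).1 p hpC 1 le_rfl
          simpa using this
        · have h2 : Tendsto (fun j => ‖q (φ j) - p‖) atTop (nhds 0) := by
            have := tendsto_iff_norm_sub_tendsto_zero.1 hconv
            simpa [Function.comp] using this
          have := h2.const_mul L
          simpa using this
      have h2 : (fun j => T (q (φ j))) = fun j => q (φ j) := by
        funext j; exact (hqF (φ j)).2
      rw [h2] at h1
      exact tendsto_nhds_unique h1 hconv
    have hpF : p ∈ F := ⟨hpC, hpT⟩
    refine ⟨p, hpC, hpT, ?_⟩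
    -- the subsequence x (n (φ j)) converges to p
    have hxsub : Tendsto (fun j => dist (x (n (φ j))) p) atTop (nhds 0) := by
      refine squeeze_zero (fun j => dist_nonneg)
        (g := fun j => 1 / (φ j + 1) + dist (q (φ j)) p) (fun j => ?_) ?_
      · calc dist (x (n (φ j))) p ≤ dist (x (n (φ j))) (q (φ j)) + dist (q (φ j)) p :=
            dist_triangle _ _ _
          _ ≤ 1 / (φ j + 1) + dist (q (φ j)) p := by
            have := hqd (φ j); linarith
      · have h1 : Tendsto (fun j => 1 / ((φ j : ℝ) + 1)) atTop (nhds 0) :=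
          tendsto_one_div_add_atTop_nhds_zero_nat.comp hφ.tendsto_atTop
        have h2 : Tendsto (fun j => dist (q (φ j)) p) atTop (nhds 0) := by
          have := tendsto_iff_dist_tendsto_zero.1 hconv
          simpa [Function.comp] using this
        have := h1.add h2
        simpa using this
    -- conclude convergence of the whole sequence
    rw [Metric.tendsto_atTop]
    intro ε hε
    have ht : Tendsto (fun i => ∑' k, a (k + i)) atTop (nhds 0) := tendsto_sum_nat_add a
    have hev : ∀ᶠ i in atTop, ∑' k, a (k + i) < ε / 8 :=
      ht.eventually_lt_const (by linarith)
    rw [eventually_atTop] at hev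
    obtain ⟨N₁, hN₁⟩ := hev
    have hxs : ∀ᶠ j in atTop, dist (x (n (φ j))) p < ε / 2 :=
      hxsub.eventually_lt_const (by linarith)
    rw [eventually_atTop] at hxs
    obtain ⟨N₂, hN₂⟩ := hxs
    set j := max N₁ N₂ with hj_def
    set n₀ := n (φ j) with hn₀_def
    have hn₀N₁ : N₁ ≤ n₀ := by
      calc N₁ ≤ j := le_max_left _ _
        _ ≤ φ j := hφ.le_apply
        _ ≤ n (φ j) := hn _
    refine ⟨n₀, fun m hm => ?_⟩
    have h1 := key2 p hpF n₀ m hm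
    have hsummable : Summable (fun k => a (k + n₀)) := (summable_nat_add_iff n₀).2 hasum
    have h2 : ∑ k ∈ Finset.Ico n₀ m, a k ≤ ∑' k, a (k + n₀) := by
      rw [Finset.sum_Ico_eq_sum_range]
      have hcongr : ∑ i ∈ Finset.range (m - n₀), a (n₀ + i)
          = ∑ i ∈ Finset.range (m - n₀), a (i + n₀) := by
        apply Finset.sum_congr rfl
        intro i _
        rw [Nat.add_comm]
      rw [hcongr]
      exact hsummable.sum_le_tsum _ (fun i _ => (ha _).1)
    have h3 : dist (x n₀) p < ε / 2 := hN₂ j (le_max_right _ _)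
    have h4 : ∑' k, a (k + n₀) < ε / 8 := hN₁ n₀ hn₀N₁
    rw [dist_eq_norm] at h3 ⊢
    linarith
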